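/- Let G be a graph, r ∈ V(G), and G⁺ = G plus a universal vertex x. Suppose x ∈ ℝ^{E(G)}_{≥0} and z ∈ ℝ^{A(G⁺)}_{≥0} (A(G⁺) the set of orientations of edges of G⁺) satisfy: z_{(r,v)} = 0 for all neighbors v of r; x_{vw} = z_{(v,w)} + z_{(w,v)} for all vw ∈ E(G); and Σ_{w ∈ N(v)} z_{(v,w)} = 1 for all v ∈ V(G⁺) \ {r}. Then for every subset U ⊆ V(G) with r ∈ U: Σ_{vw ∈ E(U)} x_{vw} ≤ |U| − 1. -/

import Mathlib

open scoped Classical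

/-- The graph `G⁺` obtained from `G` by adding a new vertex (`none`) adjacent to
every vertex of `G`. -/
def addUniversal {V : Type} (G : SimpleGraph V) : SimpleGraph (Option V) where
  Adj x y :=
    match x, y with
    | some v, some w => G.Adj v w
    | some _, none => True
    | none, some _ => True
    | none, none => False
  symm := by
    constructor
    rintro (_ | v) (_ | w) h
    · exact h
    · trivial
    · trivial
    · exact h.symm
  loopless := by
    constructor
    rintro (_ | v) h
    · exact h
    · exact G.loopless.irrefl _ h

lemma addUniversal_adj_some_some {V : Type} (G : SimpleGraph V) (v w : V) :
    (addUniversal G).Adj (some v) (some w) ↔ G.Adj v w := Iff.rfl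

theorem stmt_18 {V : Type} [Fintype V] (G : SimpleGraph V) (r : V)
    (x : Sym2 V → ℝ) (z : Option V → Option V → ℝ)
    (hxnn : ∀ e, 0 ≤ x e)
    (hznn : ∀ a b : Option V, 0 ≤ z a b)
    (hzr : ∀ b : Option V, (addUniversal G).Adj (some r) b → z (some r) b = 0)
    (hxz : ∀ v w : V, G.Adj v w →
      x s(v, w) = z (some v) (some w) + z (some w) (some v))
    (hflow : ∀ a : Option V, a ≠ some r →
      ∑ b : Option V, (if (addUniversal G).Adj a b then z a b else 0) = 1) :
    ∀ U : Finset V, r ∈ U →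
      ∑ e ∈ Finset.univ.filter
          (fun e : Sym2 V => e ∈ G.edgeSet ∧ ∀ v ∈ e, v ∈ U), x e
        ≤ (U.card : ℝ) - 1 := by
  intro U hrU
  classical
  set F : Finset (Sym2 V) :=
    Finset.univ.filter (fun e : Sym2 V => e ∈ G.edgeSet ∧ ∀ v ∈ e, v ∈ U) with hF
  set T : Finset (V × V) := (U ×ˢ U).filter (fun p => G.Adj p.1 p.2) with hT
  have hmaps : ∀ p ∈ T, Sym2.mk p.1 p.2 ∈ F := by
    intro p hp
    simp only [hT, Finset.mem_filter, Finset.mem_product] at hp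
    simp only [hF, Finset.mem_filter, Finset.mem_univ, true_and]
    refine ⟨hp.2, ?_⟩
    intro v hv
    rcases Sym2.mem_iff.mp hv with h | h
    · subst h; exact hp.1.1
    · subst h; exact hp.1.2
  have key := Finset.sum_fiberwise_of_maps_to hmaps
    (fun p => z (some p.1) (some p.2))
  have hx : ∀ e ∈ F, x e =
      ∑ p ∈ T.filter (fun p => Sym2.mk p.1 p.2 = e), z (some p.1) (some p.2) := by
    intro e he
    induction e using Sym2.inductionOn with
    | hf v w =>
      simp only [hF, Finset.mem_filter, Finset.mem_univ, true_and,
        SimpleGraph.mem_edgeSet] at he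
      obtain ⟨hadj, hmem⟩ := he
      have hv : v ∈ U := hmem v (by simp)
      have hw : w ∈ U := hmem w (by simp)
      have hvw : v ≠ w := G.ne_of_adj hadj
      have hfib : T.filter (fun p => Sym2.mk p.1 p.2 = s(v, w)) = {(v, w), (w, v)} := by
        ext p
        obtain ⟨a, b⟩ := p
        simp only [hT, Finset.mem_filter, Finset.mem_product, Finset.mem_insert,
          Finset.mem_singleton, Prod.mk.injEq, Sym2.eq_iff]
        constructor
        · rintro ⟨-, h | h⟩
          · exact Or.inl h
          · exact Or.inr h
        · rintro (⟨rfl, rfl⟩ | ⟨rfl, rfl⟩)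
          · exact ⟨⟨⟨hv, hw⟩, hadj⟩, Or.inl ⟨rfl, rfl⟩⟩
          · exact ⟨⟨⟨hw, hv⟩, hadj.symm⟩, Or.inr ⟨rfl, rfl⟩⟩
      rw [hfib, Finset.sum_insert (by simp [hvw]), Finset.sum_singleton]
      exact hxz v w hadj
  have hsum : ∑ p ∈ T, z (some p.1) (some p.2) =
      ∑ v ∈ U, ∑ w ∈ U.filter (fun w => G.Adj v w), z (some v) (some w) := by
    rw [hT, Finset.sum_filter, Finset.sum_product]
    simp [Finset.sum_filter]
  have hrow : ∀ v : V, v ≠ r →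
      ∑ w ∈ U.filter (fun w => G.Adj v w), z (some v) (some w) ≤ 1 := by
    intro v hvr
    have h1 := hflow (some v) (by simpa using hvr)
    calc ∑ w ∈ U.filter (fun w => G.Adj v w), z (some v) (some w)
        = ∑ w ∈ U.filter (fun w => G.Adj v w),
            (if (addUniversal G).Adj (some v) (some w) then z (some v) (some w)
              else 0) := by
          apply Finset.sum_congr rfl
          intro w hw
          rw [if_pos]
          exact (addUniversal_adj_some_some G v w).mpr (Finset.mem_filter.mp hw).2
      _ ≤ ∑ w : V, (if (addUniversal G).Adj (some v) (some w)
            then z (some v) (some w) else 0) := by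
          apply Finset.sum_le_sum_of_subset_of_nonneg (Finset.subset_univ _)
          intro b _ _
          split
          · exact hznn _ _
          · exact le_rfl
      _ ≤ ∑ b : Option V, (if (addUniversal G).Adj (some v) b then z (some v) b
            else 0) := by
          rw [Fintype.sum_option]
          have : (0:ℝ) ≤ (if (addUniversal G).Adj (some v) none then z (some v) none
            else 0) := by
            split
            · exact hznn _ _
            · exact le_rfl
          linarith
      _ = 1 := h1
  have hrowr : ∑ w ∈ U.filter (fun w => G.Adj r w), z (some r) (some w) = 0 := by
    apply Finset.sum_eq_zero
    intro w hw
    exact hzr (some w) ((addUniversal_adj_some_some G r w).mpr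
      (Finset.mem_filter.mp hw).2)
  have hfinal : ∑ v ∈ U, ∑ w ∈ U.filter (fun w => G.Adj v w),
      z (some v) (some w) ≤ (U.card : ℝ) - 1 := by
    rw [← Finset.sum_erase_add U _ hrU, hrowr, add_zero]
    calc ∑ v ∈ U.erase r, ∑ w ∈ U.filter (fun w => G.Adj v w), z (some v) (some w)
        ≤ ∑ v ∈ U.erase r, (1:ℝ) := by
          apply Finset.sum_le_sum
          intro v hv
          exact hrow v (Finset.ne_of_mem_erase hv)
      _ = ((U.erase r).card : ℝ) := by simp
      _ = (U.card : ℝ) - 1 := by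
          rw [Finset.card_erase_of_mem hrU]
          have h1 : 1 ≤ U.card := Finset.card_pos.mpr ⟨r, hrU⟩
          push_cast [Nat.cast_sub h1]
          ring
  calc ∑ e ∈ F, x e
      = ∑ e ∈ F, ∑ p ∈ T.filter (fun p => Sym2.mk p.1 p.2 = e),
          z (some p.1) (some p.2) := Finset.sum_congr rfl hx
    _ = ∑ p ∈ T, z (some p.1) (some p.2) := key
    _ = _ := hsum
    _ ≤ (U.card : ℝ) - 1 := hfinal
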